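/- Every instance of the related machine scheduling game admits a pure Nash equilibrium: for any n jobs with processing times 0 < p_1 ≤ p_2 ≤ … ≤ p_n and any m machines with positive speeds s_1, …, s_m, there exists a schedule τ such that for every job j and every machine i, C_j(τ) ≤ (p_j + Σ_{k < j, τ_k = i} p_k)/s_i. (Such an equilibrium is produced by the greedy Ibarra–Kim algorithm, which assigns jobs in SPT order, each to a machine minimizing its completion time given the previously assigned jobs.) -/
import Mathlib


open Finset

/-- Completion time of job `j` under schedule `τ`: jobs are processed in SPT order
(ties broken by index), so `C_j(τ) = (∑_{k ≤ j, τ_k = τ_j} p_k) / s_{τ_j}`. -/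
noncomputable def completionTime {n m : ℕ} (p : Fin n → ℝ) (s : Fin m → ℝ)
    (τ : Fin n → Fin m) (j : Fin n) : ℝ :=
  (∑ k ∈ univ.filter (fun k => k ≤ j ∧ τ k = τ j), p k) / s (τ j)

/-- Social cost: sum of completion times. -/
noncomputable def socialCost {n m : ℕ} (p : Fin n → ℝ) (s : Fin m → ℝ)
    (τ : Fin n → Fin m) : ℝ :=
  ∑ j, completionTime p s τ j

/-- `τ` is a pure Nash equilibrium: no job can decrease its completion time by
moving to another machine. -/
def IsNash {n m : ℕ} (p : Fin n → ℝ) (s : Fin m → ℝ) (τ : Fin n → Fin m) : Prop :=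
  ∀ (j : Fin n) (i : Fin m),
    completionTime p s τ j ≤
      (p j + ∑ k ∈ univ.filter (fun k => k < j ∧ τ k = i), p k) / s i

/-- `ψ_i(τ, j)`: the number of jobs on machine `i` in schedule `τ` with strictly
lower priority than job `j`. -/
def psi {n m : ℕ} (τ : Fin n → Fin m) (i : Fin m) (j : Fin n) : ℕ :=
  (univ.filter (fun k => j < k ∧ τ k = i)).card

theorem nash_exists_aux (m : ℕ) (hm : 0 < m) (s : Fin m → ℝ) :
    ∀ n (p : Fin n → ℝ), ∃ τ : Fin n → Fin m, IsNash p s τ := by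
  intro n
  induction n with
  | zero => exact fun p => ⟨Fin.elim0, fun j => j.elim0⟩
  | succ n ih =>
    intro p
    obtain ⟨τ₀, hτ₀⟩ := ih (p ∘ Fin.castSucc)
    set L : Fin m → ℝ := fun i => ∑ k ∈ univ.filter (fun k => τ₀ k = i), p (Fin.castSucc k)
      with hL
    obtain ⟨i₀, -, hi₀⟩ := Finset.exists_min_image univ
      (fun i => (p (Fin.last n) + L i) / s i) ⟨⟨0, hm⟩, mem_univ _⟩
    refine ⟨(Fin.snoc τ₀ i₀ : Fin (n+1) → Fin m), ?_⟩
    have hA : ∀ i : Fin m,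
        ∑ k ∈ (univ : Finset (Fin (n+1))).filter
            (fun k => k < Fin.last n ∧ (Fin.snoc τ₀ i₀ : Fin (n+1) → Fin m) k = i), p k = L i := by
      intro i
      rw [Finset.sum_filter, Fin.sum_univ_castSucc]
      simp [Fin.snoc_castSucc, Fin.snoc_last, Fin.castSucc_lt_last, hL, Finset.sum_filter]
    intro j i
    induction j using Fin.lastCases with
    | last =>
      have hB : ∑ k ∈ (univ : Finset (Fin (n+1))).filter
          (fun k => k ≤ Fin.last n ∧ (Fin.snoc τ₀ i₀ : Fin (n+1) → Fin m) k = (Fin.snoc τ₀ i₀ : Fin (n+1) → Fin m) (Fin.last n)), p k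
          = p (Fin.last n) + L i₀ := by
        rw [Finset.sum_filter, Fin.sum_univ_castSucc]
        simp [Fin.snoc_castSucc, Fin.snoc_last, Fin.le_last, hL, Finset.sum_filter, add_comm]
      rw [completionTime, hB, hA i, Fin.snoc_last]
      exact hi₀ i (mem_univ i)
    | cast j' =>
      have hC : ∑ k ∈ (univ : Finset (Fin (n+1))).filter
          (fun k => k ≤ Fin.castSucc j' ∧ (Fin.snoc τ₀ i₀ : Fin (n+1) → Fin m) k = (Fin.snoc τ₀ i₀ : Fin (n+1) → Fin m) (Fin.castSucc j')), p k
          = ∑ k ∈ (univ : Finset (Fin n)).filter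
            (fun k => k ≤ j' ∧ τ₀ k = τ₀ j'), (p ∘ Fin.castSucc) k := by
        rw [Finset.sum_filter, Fin.sum_univ_castSucc, Finset.sum_filter]
        simp [Fin.snoc_castSucc, Fin.snoc_last, Fin.castSucc_le_castSucc_iff,
          (Fin.castSucc_lt_last j').not_ge]
      have hD : ∑ k ∈ (univ : Finset (Fin (n+1))).filter
          (fun k => k < Fin.castSucc j' ∧ (Fin.snoc τ₀ i₀ : Fin (n+1) → Fin m) k = i), p k
          = ∑ k ∈ (univ : Finset (Fin n)).filter
            (fun k => k < j' ∧ τ₀ k = i), (p ∘ Fin.castSucc) k := by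
        rw [Finset.sum_filter, Fin.sum_univ_castSucc, Finset.sum_filter]
        simp [Fin.snoc_castSucc, Fin.snoc_last, Fin.castSucc_lt_castSucc_iff,
          ((Fin.castSucc_lt_last j').le).not_gt]
      rw [completionTime, hC, hD, Fin.snoc_castSucc]
      exact hτ₀ j' i

/-- Every instance of the related machine scheduling game admits a pure Nash
equilibrium (e.g. one produced by the greedy Ibarra–Kim algorithm). -/
theorem nash_exists (n m : ℕ) (hm : 0 < m) (p : Fin n → ℝ) (s : Fin m → ℝ)
    (hp : ∀ j, 0 < p j) (hpmono : Monotone p) (hs : ∀ i, 0 < s i) :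
    ∃ τ : Fin n → Fin m, IsNash p s τ := by
  exact nash_exists_aux m hm s n p
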